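/- Colouring lemma: Let n ≥ 1 and θ ≥ 2 be integers, let f : S_n → ℝ be a probability distribution on the symmetric group S_n that is a class function (f(σ) depends only on the cycle type of σ), and let p_1, …, p_θ ≥ 0 with ∑_{i=1}^θ p_i = 1. Then ∑_{σ ∈ S_n} f(σ)·∏_γ (∑_{i=1}^θ p_i^{|γ|}) = ∑_{λ ⊢_θ n} C(n;λ)·(∑_{κ ∈ K(λ)} ∏_{i=1}^θ p_i^{κ_i})·∑_{σ ∈ T_λ} f(σ), where the product over γ runs over the cycles of σ (orbits on {1,…,n}, including fixed points) and |γ| is the length of γ. -/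

import Mathlib

/-- The multiset of cycle lengths of `σ`, including singletons (fixed points). -/
def cycleMultiset (n : ℕ) (σ : Equiv.Perm (Fin n)) : Multiset ℕ :=
  σ.cycleType + Multiset.replicate (n - σ.support.card) 1

/-- The finset of partitions of `n` into at most `θ` parts, viewed as
weakly decreasing vectors `λ : Fin θ → ℕ` with `∑ λ_i = n`. -/
def partitionsTh (θ n : ℕ) : Finset (Fin θ → ℕ) :=
  (Fintype.piFinset fun _ : Fin θ => Finset.range (n + 1)).filter
    (fun lam => (∀ i j : Fin θ, i ≤ j → lam j ≤ lam i) ∧ ∑ i, lam i = n)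

-- `K(λ)`: the finset of vectors obtained by permuting the entries of `λ`.
open scoped Classical in
noncomputable def rearrangements (θ n : ℕ) (lam : Fin θ → ℕ) : Finset (Fin θ → ℕ) :=
  (Fintype.piFinset fun _ : Fin θ => Finset.range (n + 1)).filter
    (fun κ => ∃ π : Equiv.Perm (Fin θ), κ = lam ∘ π)

/-- The index of the consecutive block (of sizes `λ_1, λ_2, …`) containing position `v`. -/
def blockOf (θ : ℕ) (lam : Fin θ → ℕ) (v : ℕ) : ℕ :=
  (Finset.univ.filter (fun i : Fin θ =>
    (∑ j ∈ Finset.univ.filter (fun j : Fin θ => j ≤ i), lam j) ≤ v)).card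

/-- The Young subgroup `T_λ` of `S_n`, as a finset: permutations preserving each of the
consecutive blocks `{1,…,λ_1}, {λ_1+1,…,λ_1+λ_2}, …` of sizes `λ_1,…,λ_θ`. -/
def youngFinset (n θ : ℕ) (lam : Fin θ → ℕ) : Finset (Equiv.Perm (Fin n)) :=
  Finset.univ.filter (fun σ => ∀ v : Fin n, blockOf θ lam ((σ v : ℕ)) = blockOf θ lam (v : ℕ))

theorem Equiv.Perm.apply_inv_self {α : Type*} (σ : Equiv.Perm α) (x : α) : σ (σ⁻¹ x) = x :=
  σ.apply_symm_apply x

namespace Stmt2Aux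

open Finset Equiv

variable {n θ : ℕ}

/-! ### Basic auxiliary definitions -/

/-- The stabilizer of a colouring, as a finset of permutations. -/
def stab (n : ℕ) {α : Type*} [DecidableEq α] (g : Fin n → α) : Finset (Equiv.Perm (Fin n)) :=
  Finset.univ.filter (fun σ => ∀ v, g (σ v) = g v)

/-- Fiber sizes of a colouring. -/
def fib (n θ : ℕ) (g : Fin n → Fin θ) : Fin θ → ℕ :=
  fun i => (Finset.univ.filter (fun v => g v = i)).card

/-- Compositions of `n` into `θ` parts. -/
def comps (θ n : ℕ) : Finset (Fin θ → ℕ) :=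
  (Fintype.piFinset fun _ : Fin θ => Finset.range (n + 1)).filter (fun κ => ∑ i, κ i = n)

/-- Weakly decreasing rearrangement of a tuple. -/
noncomputable def sortTuple (θ : ℕ) (κ : Fin θ → ℕ) : Fin θ → ℕ :=
  κ ∘ (Tuple.sort (fun i => OrderDual.toDual (κ i)))

/-! ### Invariance of colourings under powers -/

lemma pow_colour {α : Type*} (σ : Equiv.Perm (Fin n)) (g : Fin n → α)
    (hg : ∀ v, g (σ v) = g v) : ∀ (k : ℕ) (v : Fin n), g ((σ ^ k) v) = g v := by
  intro k
  induction k with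
  | zero => simp
  | succ m ih =>
    intro v
    rw [pow_succ, Equiv.Perm.mul_apply, ih, hg]

lemma zpow_colour {α : Type*} (σ : Equiv.Perm (Fin n)) (g : Fin n → α)
    (hg : ∀ v, g (σ v) = g v) : ∀ (i : ℤ) (v : Fin n), g ((σ ^ i) v) = g v := by
  intro i v
  cases i with
  | ofNat k => rw [Int.ofNat_eq_coe, zpow_natCast]; exact pow_colour σ g hg k v
  | negSucc k =>
    rw [zpow_negSucc]
    conv_rhs => rw [← Equiv.Perm.apply_inv_self (σ ^ (k+1)) v]
    exact (pow_colour σ g hg (k+1) _).symm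

/-! ### Class function sums over conjugate stabilizers -/

lemma stab_sum_eq (f : Equiv.Perm (Fin n) → ℝ)
    (hclass : ∀ σ π : Equiv.Perm (Fin n), σ.cycleType = π.cycleType → f σ = f π)
    {α : Type*} [DecidableEq α] (g g' : Fin n → α) (τ : Equiv.Perm (Fin n))
    (hτ : ∀ v, g (τ v) = g' v) :
    ∑ σ ∈ stab n g', f σ = ∑ σ ∈ stab n g, f σ := by
  have hτ' : ∀ v, g' (τ⁻¹ v) = g v := by
    intro v; rw [← hτ (τ⁻¹ v), Equiv.Perm.apply_inv_self]
  refine Finset.sum_bij' (fun σ _ => τ * σ * τ⁻¹) (fun σ _ => τ⁻¹ * σ * τ) ?_ ?_ ?_ ?_ ?_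
  · intro σ hσ
    simp only [stab, mem_filter, mem_univ, true_and] at hσ ⊢
    intro v
    simp only [Equiv.Perm.mul_apply]
    rw [hτ, hσ, hτ']
  · intro σ hσ
    simp only [stab, mem_filter, mem_univ, true_and] at hσ ⊢
    intro v
    simp only [Equiv.Perm.mul_apply]
    rw [hτ', hσ, hτ]
  · intro σ _; group
  · intro σ _; group
  · intro σ _
    exact hclass σ (τ * σ * τ⁻¹) Equiv.Perm.cycleType_conj.symm

/-! ### Existence of a permutation matching two colourings with equal fiber sizes -/

lemma exists_perm_of_fib_eq (g g' : Fin n → Fin θ) (h : fib n θ g = fib n θ g') :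
    ∃ τ : Equiv.Perm (Fin n), ∀ v, g (τ v) = g' v := by
  have hcard : ∀ i, Fintype.card {v // g' v = i} = Fintype.card {v // g v = i} := by
    intro i
    rw [Fintype.card_subtype, Fintype.card_subtype]
    exact (congrFun h i).symm
  let e : ∀ i : Fin θ, {v // g' v = i} ≃ {v // g v = i} := fun i =>
    Fintype.equivOfCardEq (hcard i)
  refine ⟨((Equiv.sigmaFiberEquiv g').symm.trans (Equiv.sigmaCongrRight e)).trans
      (Equiv.sigmaFiberEquiv g), fun v => ?_⟩
  have h1 : (Equiv.sigmaFiberEquiv g').symm v = ⟨g' v, ⟨v, rfl⟩⟩ := by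
    apply (Equiv.sigmaFiberEquiv g').injective
    simp [Equiv.sigmaFiberEquiv]
  show g ((Equiv.sigmaFiberEquiv g)
    ((Equiv.sigmaCongrRight e) ((Equiv.sigmaFiberEquiv g').symm v))) = g' v
  rw [h1]
  exact (e (g' v) ⟨v, rfl⟩).2

/-! ### Uniqueness of the sorted rearrangement -/

lemma sorted_unique (lam₁ lam₂ : Fin θ → ℕ) (h₁ : ∀ i j : Fin θ, i ≤ j → lam₁ j ≤ lam₁ i)
    (h₂ : ∀ i j : Fin θ, i ≤ j → lam₂ j ≤ lam₂ i) (π : Equiv.Perm (Fin θ))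
    (h : lam₁ = lam₂ ∘ π) : lam₁ = lam₂ := by
  let f : Fin θ → ℕᵒᵈ := fun i => OrderDual.toDual (lam₂ i)
  have hm1 : Monotone (f ∘ π) := by
    intro a b hab
    show OrderDual.toDual (lam₂ (π a)) ≤ OrderDual.toDual (lam₂ (π b))
    rw [OrderDual.toDual_le_toDual]
    calc lam₂ (π b) = lam₁ b := (congrFun h b).symm
    _ ≤ lam₁ a := h₁ a b hab
    _ = lam₂ (π a) := congrFun h a
  have hm2 : Monotone f := fun a b hab => by
    show OrderDual.toDual (lam₂ a) ≤ OrderDual.toDual (lam₂ b)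
    rw [OrderDual.toDual_le_toDual]
    exact h₂ a b hab
  have key := Tuple.unique_monotone hm1 (by simpa using hm2 : Monotone (f ∘ ⇑(Equiv.refl (Fin θ))))
  funext i
  have : f (π i) = f i := by
    have := congrFun key i
    simpa using this
  rw [h]
  exact congrArg OrderDual.ofDual this

/-! ### Block structure of a composition -/

/-- partial sums (inclusive) -/
def pS (lam : Fin θ → ℕ) (i : Fin θ) : ℕ :=
  ∑ j ∈ Finset.univ.filter (fun j : Fin θ => j ≤ i), lam j

/-- partial sums (exclusive) -/
def pre (lam : Fin θ → ℕ) (b : Fin θ) : ℕ :=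
  ∑ j ∈ Finset.univ.filter (fun j : Fin θ => j < b), lam j

variable (lam : Fin θ → ℕ)

lemma pS_mono {i i' : Fin θ} (h : i ≤ i') : pS lam i ≤ pS lam i' := by
  apply Finset.sum_le_sum_of_subset
  intro j hj
  simp only [mem_filter, mem_univ, true_and] at hj ⊢
  exact le_trans hj h

lemma pS_eq (b : Fin θ) : pS lam b = pre lam b + lam b := by
  unfold pS pre
  rw [add_comm]
  have : Finset.univ.filter (fun j : Fin θ => j ≤ b)
      = insert b (Finset.univ.filter (fun j : Fin θ => j < b)) := by
    ext j
    simp only [mem_filter, mem_univ, true_and, mem_insert, Fin.lt_def, Fin.le_def, Fin.ext_iff]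
    omega
  rw [this, Finset.sum_insert (by simp)]

lemma pre_le_pS {i b : Fin θ} (h : i < b) : pS lam i ≤ pre lam b := by
  apply Finset.sum_le_sum_of_subset
  intro j hj
  simp only [mem_filter, mem_univ, true_and] at hj ⊢
  exact lt_of_le_of_lt hj h

lemma blockOf_eq_card (v : ℕ) :
    blockOf θ lam v = (Finset.univ.filter (fun i : Fin θ => pS lam i ≤ v)).card := rfl

/-- lower-set membership characterization -/
lemma mem_iff_lt_card (v : ℕ) (i : Fin θ) :
    pS lam i ≤ v ↔ (i : ℕ) < blockOf θ lam v := by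
  rw [blockOf_eq_card]
  set F := Finset.univ.filter (fun i : Fin θ => pS lam i ≤ v) with hF
  constructor
  · intro h
    have hsub : Finset.Iic i ⊆ F := by
      intro j hj
      simp only [Finset.mem_Iic] at hj
      simp only [hF, mem_filter, mem_univ, true_and]
      exact le_trans (pS_mono lam hj) h
    have := Finset.card_le_card hsub
    rw [Fin.card_Iic] at this
    omega
  · intro h
    by_contra hc
    have hsub : F ⊆ Finset.Iio i := by
      intro j hj
      simp only [hF, mem_filter, mem_univ, true_and] at hj
      simp only [Finset.mem_Iio]
      by_contra hji
      push_neg at hji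
      exact hc (le_trans (pS_mono lam hji) hj)
    have := Finset.card_le_card hsub
    rw [Fin.card_Iio] at this
    omega

lemma blockOf_eq_iff (v : ℕ) (b : Fin θ) :
    blockOf θ lam v = (b : ℕ) ↔ (pre lam b ≤ v ∧ v < pre lam b + lam b) := by
  rw [← pS_eq]
  constructor
  · intro h
    constructor
    · rcases Nat.eq_zero_or_pos (b : ℕ) with hb | hb
      · have : pre lam b = 0 := by
          unfold pre
          rw [Finset.sum_eq_zero_iff]
          intro j hj
          simp only [mem_filter, mem_univ, true_and] at hj
          exfalso
          have := Fin.lt_def.mp hj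
          omega
        omega
      · set i : Fin θ := ⟨(b : ℕ) - 1, lt_trans (by omega) b.isLt⟩ with hi
        have h1 : pS lam i ≤ v := by
          rw [mem_iff_lt_card, h]
          simp only [hi]
          omega
        have h2 : pre lam b = pS lam i := by
          unfold pre pS
          congr 1
          ext j
          simp only [mem_filter, mem_univ, true_and]
          constructor
          · intro hj; rw [Fin.le_def]; simp only [hi]; have := Fin.lt_def.mp hj; omega
          · intro hj; rw [Fin.lt_def]; have := Fin.le_def.mp hj; simp only [hi] at this; omega
        omega
    · have : ¬ (pS lam b ≤ v) := by
        rw [mem_iff_lt_card, h]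
        omega
      omega
  · rintro ⟨h1, h2⟩
    rw [blockOf_eq_card]
    have : Finset.univ.filter (fun i : Fin θ => pS lam i ≤ v) = Finset.Iio b := by
      ext i
      simp only [mem_filter, mem_univ, true_and, Finset.mem_Iio]
      constructor
      · intro h
        by_contra hc
        push_neg at hc
        have := pS_mono lam hc
        omega
      · intro h
        exact le_trans (le_trans (pre_le_pS lam h) h1) le_rfl
    rw [this, Fin.card_Iio]

lemma pS_le (hsum : ∑ i, lam i = n) (b : Fin θ) : pS lam b ≤ n := by
  rw [← hsum]
  exact Finset.sum_le_sum_of_subset (Finset.filter_subset _ _)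

lemma blockOf_lt (hθ : 1 ≤ θ) (hsum : ∑ i, lam i = n) (v : Fin n) :
    blockOf θ lam v < θ := by
  set top : Fin θ := ⟨θ - 1, by omega⟩ with htop
  have hpS : pS lam top = n := by
    rw [← hsum]
    unfold pS
    congr 1
    rw [Finset.filter_true_of_mem]
    intro j _
    rw [Fin.le_def]
    simp only [htop]
    omega
  have h1 : ¬ pS lam top ≤ (v : ℕ) := by
    rw [hpS]
    omega
  rw [mem_iff_lt_card] at h1
  simp only [htop] at h1
  omega

lemma card_val_interval (a c : ℕ) (hc : c ≤ n) :
    (Finset.univ.filter (fun v : Fin n => a ≤ (v : ℕ) ∧ (v : ℕ) < c)).card = c - a := by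
  have himg : (Finset.univ.filter (fun v : Fin n => a ≤ (v : ℕ) ∧ (v : ℕ) < c)).image Fin.val
      = Finset.Ico a c := by
    ext x
    simp only [Finset.mem_image, mem_filter, mem_univ, true_and, Finset.mem_Ico]
    constructor
    · rintro ⟨v, ⟨h1, h2⟩, rfl⟩; exact ⟨h1, h2⟩
    · rintro ⟨h1, h2⟩; exact ⟨⟨x, lt_of_lt_of_le h2 hc⟩, ⟨h1, h2⟩, rfl⟩
  rw [← Nat.card_Ico, ← himg, Finset.card_image_of_injective _ Fin.val_injective]

/-- The canonical colouring with consecutive blocks. -/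
noncomputable def gcan (n θ : ℕ) (hθ : 1 ≤ θ) (lam : Fin θ → ℕ) (hsum : ∑ i, lam i = n) :
    Fin n → Fin θ :=
  fun v => ⟨blockOf θ lam v, blockOf_lt lam hθ hsum v⟩

lemma fib_gcan (hθ : 1 ≤ θ) (hsum : ∑ i, lam i = n) :
    fib n θ (gcan n θ hθ lam hsum) = lam := by
  funext b
  unfold fib
  have : ∀ v : Fin n, gcan n θ hθ lam hsum v = b
      ↔ (pre lam b ≤ (v : ℕ) ∧ (v : ℕ) < pre lam b + lam b) := by
    intro v
    rw [← blockOf_eq_iff]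
    unfold gcan
    rw [Fin.ext_iff]
  rw [Finset.filter_congr (fun v _ => by rw [this v])]
  rw [card_val_interval _ _ (by rw [← pS_eq]; exact pS_le lam hsum b)]
  omega

lemma stab_gcan (hθ : 1 ≤ θ) (hsum : ∑ i, lam i = n) :
    stab n (gcan n θ hθ lam hsum) = youngFinset n θ lam := by
  unfold stab youngFinset gcan
  apply Finset.filter_congr
  intro σ _
  simp only [Fin.ext_iff]

/-! ### Cardinality of the set of colourings with prescribed fiber sizes -/

noncomputable def stabEquiv (g : Fin n → Fin θ) :
    {σ : Equiv.Perm (Fin n) // ∀ v, g (σ v) = g v} ≃ (∀ i : Fin θ, Equiv.Perm {v // g v = i}) where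
  toFun σ := fun i => Equiv.Perm.subtypePerm σ.1 (fun v => by
    constructor
    · intro h; rw [← σ.2 v]; exact h
    · intro h; rw [σ.2 v]; exact h)
  invFun π := ⟨(Equiv.sigmaFiberEquiv g).permCongr (Equiv.sigmaCongrRight π), by
    intro v
    have : (Equiv.sigmaFiberEquiv g).symm v = ⟨g v, ⟨v, rfl⟩⟩ := by
      apply (Equiv.sigmaFiberEquiv g).injective
      simp [Equiv.sigmaFiberEquiv]
    simp only [Equiv.permCongr_apply, this]
    exact (π (g v) ⟨v, rfl⟩).2⟩
  left_inv σ := by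
    apply Subtype.ext
    apply Equiv.ext
    intro v
    have : (Equiv.sigmaFiberEquiv g).symm v = ⟨g v, ⟨v, rfl⟩⟩ := by
      apply (Equiv.sigmaFiberEquiv g).injective
      simp [Equiv.sigmaFiberEquiv]
    simp only [Equiv.permCongr_apply, this]
    rfl
  right_inv π := by
    funext i
    apply Equiv.ext
    rintro ⟨v, hv⟩
    apply Subtype.ext
    subst hv
    have : (Equiv.sigmaFiberEquiv g).symm v = ⟨g v, ⟨v, rfl⟩⟩ := by
      apply (Equiv.sigmaFiberEquiv g).injective
      simp [Equiv.sigmaFiberEquiv]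
    show ((Equiv.sigmaFiberEquiv g).permCongr (Equiv.sigmaCongrRight π) v : Fin n) = _
    simp only [Equiv.permCongr_apply, this]
    rfl

lemma card_stab (g : Fin n → Fin θ) :
    (stab n g).card = ∏ i, Nat.factorial (fib n θ g i) := by
  unfold stab
  rw [← Fintype.card_subtype]
  rw [Fintype.card_congr (stabEquiv g)]
  rw [Fintype.card_pi]
  congr 1
  funext i
  rw [Fintype.card_perm, Fintype.card_subtype]
  rfl

lemma fib_comp (g : Fin n → Fin θ) (σ : Equiv.Perm (Fin n)) :
    fib n θ (fun v => g (σ v)) = fib n θ g := by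
  funext i
  unfold fib
  apply Finset.card_bij (fun v _ => σ v)
  · intro v hv
    simp only [mem_filter, mem_univ, true_and] at hv ⊢
    exact hv
  · intro v _ w _ hvw
    exact σ.injective hvw
  · intro w hw
    simp only [mem_filter, mem_univ, true_and] at hw ⊢
    exact ⟨σ⁻¹ w, by rwa [Equiv.Perm.apply_inv_self], Equiv.Perm.apply_inv_self σ w⟩

lemma card_fib_eq (κ : Fin θ → ℕ) (hsum : ∑ i, κ i = n) (gc : Fin n → Fin θ)
    (hgc : fib n θ gc = κ) :
    (Finset.univ.filter (fun g : Fin n → Fin θ => fib n θ g = κ)).card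
      = Nat.multinomial Finset.univ κ := by
  classical
  set T := Finset.univ.filter (fun g : Fin n → Fin θ => fib n θ g = κ) with hT
  have key : (Finset.univ : Finset (Equiv.Perm (Fin n))).card
      = ∑ g ∈ T, (Finset.univ.filter
          (fun σ : Equiv.Perm (Fin n) => (fun v => gc (σ v)) = g)).card := by
    apply Finset.card_eq_sum_card_fiberwise
    intro σ _
    simp only [hT, Finset.mem_coe, mem_filter, mem_univ, true_and]
    rw [fib_comp gc σ, hgc]
  have fiber_card : ∀ g ∈ T,
      (Finset.univ.filter (fun σ : Equiv.Perm (Fin n) => (fun v => gc (σ v)) = g)).card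
        = (stab n gc).card := by
    intro g hg
    simp only [hT, mem_filter, mem_univ, true_and] at hg
    obtain ⟨τ, hτ⟩ := exists_perm_of_fib_eq gc g (by rw [hgc, hg])
    apply Finset.card_bij' (fun σ _ => σ * τ⁻¹) (fun ρ _ => ρ * τ)
    · intro σ hσ
      simp only [mem_filter, mem_univ, true_and, stab] at hσ ⊢
      intro v
      have := congrFun hσ (τ⁻¹ v)
      simp only [Equiv.Perm.mul_apply] at this ⊢
      rw [this, ← hτ (τ⁻¹ v), Equiv.Perm.apply_inv_self]
    · intro ρ hρ
      simp only [mem_filter, mem_univ, true_and, stab] at hρ ⊢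
      funext v
      simp only [Equiv.Perm.mul_apply]
      rw [hρ (τ v), hτ]
    · intro σ _; group
    · intro ρ _; group
  rw [Finset.sum_congr rfl fiber_card, Finset.sum_const, smul_eq_mul] at key
  rw [card_stab gc, hgc] at key
  rw [Finset.card_univ, Fintype.card_perm, Fintype.card_fin] at key
  have spec := Nat.multinomial_spec Finset.univ κ
  rw [hsum] at spec
  have hpos : 0 < ∏ i, Nat.factorial (κ i) :=
    Finset.prod_pos (fun i _ => Nat.factorial_pos _)
  apply Nat.eq_of_mul_eq_mul_right hpos
  rw [← key, ← spec]
  ring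

/-! ### Step A: the cycle product as a sum over invariant colourings -/

lemma stepA (p : Fin θ → ℝ) (hp1 : ∑ i, p i = 1) (σ : Equiv.Perm (Fin n)) :
    ((cycleMultiset n σ).map (fun l => ∑ i, p i ^ l)).prod
      = ∑ g ∈ Finset.univ.filter (fun g : Fin n → Fin θ => ∀ v, g (σ v) = g v),
          ∏ v, p (g v) := by
  classical
  set F : ℕ → ℝ := fun l => ∑ i, p i ^ l with hFdef
  have hF1 : F 1 = 1 := by simp only [hFdef, pow_one]; exact hp1
  let s : Setoid (Fin n) :=
    ⟨σ.SameCycle, ⟨fun x => Equiv.Perm.SameCycle.refl σ x, Equiv.Perm.SameCycle.symm,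
      Equiv.Perm.SameCycle.trans⟩⟩
  have hexact : ∀ v w : Fin n, Quotient.mk s v = Quotient.mk s w → σ.SameCycle v w :=
    fun v w h => Quotient.exact h
  have hquot : ∀ (g : Fin n → Fin θ), (∀ v, g (σ v) = g v) →
      ∀ v w : Fin n, Quotient.mk s v = Quotient.mk s w → g v = g w := by
    intro g hg v w h
    obtain ⟨i, hi⟩ := hexact v w h
    rw [← hi]
    exact (zpow_colour σ g hg i v).symm
  let size : Quotient s → ℕ := fun q => (Finset.univ.filter (fun v => Quotient.mk s v = q)).card
  have step1 : ∑ g ∈ Finset.univ.filter (fun g : Fin n → Fin θ => ∀ v, g (σ v) = g v),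
      ∏ v, p (g v)
      = ∑ c : Quotient s → Fin θ, ∏ v, p (c (Quotient.mk s v)) := by
    apply Finset.sum_bij' (i := fun g _ => fun q : Quotient s => g q.out)
      (j := fun c _ => fun v => c (Quotient.mk s v))
    · intro g _; exact Finset.mem_univ _
    · intro c _
      simp only [mem_filter, mem_univ, true_and]
      intro v
      apply congrArg c
      apply Quotient.sound
      exact Equiv.Perm.sameCycle_apply_left.mpr (Equiv.Perm.SameCycle.refl σ v)
    · intro g hg
      simp only [mem_filter, mem_univ, true_and] at hg
      funext v
      exact hquot g hg _ v (Quotient.out_eq _)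
    · intro c _
      funext q
      exact congrArg c (Quotient.out_eq q)
    · intro g hg
      simp only [mem_filter, mem_univ, true_and] at hg
      apply Finset.prod_congr rfl
      intro v _
      exact congrArg p (hquot g hg v _ (Quotient.out_eq _).symm)
  have step2 : ∀ c : Quotient s → Fin θ,
      ∏ v, p (c (Quotient.mk s v)) = ∏ q : Quotient s, p (c q) ^ size q := by
    intro c
    rw [← Finset.prod_fiberwise_of_maps_to
      (g := fun v : Fin n => Quotient.mk s v) (t := Finset.univ)
      (fun v _ => Finset.mem_univ _) (fun v => p (c (Quotient.mk s v)))]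
    apply Finset.prod_congr rfl
    intro q _
    have hcon : ∀ v ∈ Finset.univ.filter (fun v : Fin n => Quotient.mk s v = q),
        p (c (Quotient.mk s v)) = p (c q) := by
      intro v hv
      simp only [mem_filter, mem_univ, true_and] at hv
      rw [hv]
    rw [Finset.prod_congr rfl hcon, Finset.prod_const]
  have step3 : ∑ c : Quotient s → Fin θ, ∏ q : Quotient s, p (c q) ^ size q
      = ∏ q : Quotient s, F (size q) := by
    rw [show (fun q : Quotient s => F (size q)) = fun q => ∑ i, p i ^ size q from rfl]
    rw [Finset.prod_univ_sum (fun _ => Finset.univ) (fun q i => p i ^ size q)]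
    rw [Fintype.piFinset_univ]
  have fiber_single : ∀ q : Quotient s, q.out ∉ σ.support →
      Finset.univ.filter (fun v => Quotient.mk s v = q) = {q.out} := by
    intro q hq
    have hfix : σ q.out = q.out := by rwa [Equiv.Perm.notMem_support] at hq
    ext v
    simp only [mem_filter, mem_univ, true_and, Finset.mem_singleton]
    constructor
    · intro h
      obtain ⟨i, hi⟩ := hexact v q.out (by rw [h, Quotient.out_eq])
      have : (σ ^ i) q.out = q.out := Equiv.Perm.zpow_apply_eq_self_of_apply_eq_self hfix i
      exact (σ ^ i).injective (by rw [hi, this])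
    · intro h; rw [h, Quotient.out_eq]
  have step4 : ∏ q : Quotient s, F (size q)
      = ∏ c ∈ σ.cycleFactorsFinset, F c.support.card := by
    rw [← Finset.prod_filter_mul_prod_filter_not Finset.univ
      (fun q : Quotient s => q.out ∈ σ.support)]
    have h2 : ∏ q ∈ Finset.univ.filter (fun q : Quotient s => ¬ q.out ∈ σ.support),
        F (size q) = 1 := by
      apply Finset.prod_eq_one
      intro q hq
      simp only [mem_filter, mem_univ, true_and] at hq
      have : size q = 1 := by
        show (Finset.univ.filter (fun v => Quotient.mk s v = q)).card = 1
        rw [fiber_single q hq, Finset.card_singleton]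
      rw [this, hF1]
    rw [h2, mul_one]
    apply Finset.prod_bij (i := fun q _ => σ.cycleOf q.out)
    · intro q hq
      simp only [mem_filter, mem_univ, true_and] at hq
      exact Equiv.Perm.cycleOf_mem_cycleFactorsFinset_iff.mpr hq
    · intro q1 h1 q2 h2 heq
      simp only [mem_filter, mem_univ, true_and] at h1 h2
      have hm : q2.out ∈ (σ.cycleOf q1.out).support := by
        rw [heq]
        exact Equiv.Perm.mem_support_cycleOf_iff.mpr ⟨Equiv.Perm.SameCycle.refl σ _, h2⟩
      have hsc : σ.SameCycle q1.out q2.out := (Equiv.Perm.mem_support_cycleOf_iff.mp hm).1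
      calc q1 = Quotient.mk s q1.out := (Quotient.out_eq q1).symm
        _ = Quotient.mk s q2.out := Quotient.sound hsc
        _ = q2 := Quotient.out_eq q2
    · intro c hc
      obtain ⟨x, hx, -⟩ := (Equiv.Perm.mem_cycleFactorsFinset_iff.mp hc).1
      have hxc : x ∈ c.support := Equiv.Perm.mem_support.mpr hx
      have hxσ : x ∈ σ.support := by
        rw [Equiv.Perm.mem_support]
        rw [← (Equiv.Perm.mem_cycleFactorsFinset_iff.mp hc).2 x hxc]
        exact hx
      refine ⟨Quotient.mk s x, ?_, ?_⟩
      · simp only [mem_filter, mem_univ, true_and]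
        have hsc : σ.SameCycle x (Quotient.mk s x).out :=
          hexact x _ (Quotient.out_eq _).symm
        exact Equiv.Perm.support_cycleOf_le σ x
          (Equiv.Perm.mem_support_cycleOf_iff.mpr ⟨hsc, hxσ⟩)
      · have hsc : σ.SameCycle x (Quotient.mk s x).out :=
          hexact x _ (Quotient.out_eq _).symm
        rw [← hsc.cycleOf_eq]
        exact (Equiv.Perm.cycle_is_cycleOf hxc hc).symm
    · intro q hq
      simp only [mem_filter, mem_univ, true_and] at hq
      congr 1
      show (Finset.univ.filter (fun v => Quotient.mk s v = q)).card = _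
      congr 1
      ext v
      simp only [mem_filter, mem_univ, true_and]
      rw [Equiv.Perm.mem_support_cycleOf_iff]
      constructor
      · intro h
        refine ⟨(hexact v q.out (by rw [h, Quotient.out_eq])).symm, hq⟩
      · rintro ⟨hsc, -⟩
        calc Quotient.mk s v = Quotient.mk s q.out := Quotient.sound hsc.symm
          _ = q := Quotient.out_eq q
  have lhs_eq : ((cycleMultiset n σ).map F).prod
      = ∏ c ∈ σ.cycleFactorsFinset, F c.support.card := by
    unfold cycleMultiset
    rw [Multiset.map_add, Multiset.prod_add, Multiset.map_replicate, Multiset.prod_replicate,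
      hF1, one_pow, mul_one]
    rw [Equiv.Perm.cycleType_def, Multiset.map_map, Finset.prod_eq_multiset_prod]
    rfl
  rw [lhs_eq, ← step4, ← step3, step1]
  exact Finset.sum_congr rfl (fun c _ => (step2 c).symm)

/-! ### Sorting -/

lemma sortTuple_mem (κ : Fin θ → ℕ) (hκ : κ ∈ comps θ n) :
    sortTuple θ κ ∈ partitionsTh θ n ∧ κ ∈ rearrangements θ n (sortTuple θ κ) := by
  classical
  simp only [comps, mem_filter, Fintype.mem_piFinset, Finset.mem_range] at hκ
  obtain ⟨hrange, hsum⟩ := hκ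
  set e := Tuple.sort (fun i => OrderDual.toDual (κ i)) with he
  have hmono := Tuple.monotone_sort (fun i => OrderDual.toDual (κ i))
  constructor
  · simp only [partitionsTh, mem_filter, Fintype.mem_piFinset, Finset.mem_range]
    refine ⟨fun i => hrange (e i), ?_, ?_⟩
    · intro i j hij
      exact hmono hij
    · rw [show (∑ i, sortTuple θ κ i) = ∑ i, κ (e i) from rfl]
      rw [Equiv.sum_comp e κ]
      exact hsum
  · simp only [rearrangements, mem_filter, Fintype.mem_piFinset, Finset.mem_range]
    refine ⟨hrange, e.symm, ?_⟩
    funext i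
    show κ i = κ (e (e.symm i))
    rw [Equiv.apply_symm_apply]

lemma multinomial_comp (lam : Fin θ → ℕ) (π : Equiv.Perm (Fin θ)) :
    Nat.multinomial Finset.univ (lam ∘ π) = Nat.multinomial Finset.univ lam := by
  unfold Nat.multinomial
  simp only [Function.comp_apply]
  rw [Equiv.sum_comp π lam, Equiv.prod_comp π (fun i => Nat.factorial (lam i))]

/-! ### The stabilizer sum equals the Young subgroup sum -/

lemma stabsum_young (hθ : 1 ≤ θ) (f : Equiv.Perm (Fin n) → ℝ)
    (hclass : ∀ σ π : Equiv.Perm (Fin n), σ.cycleType = π.cycleType → f σ = f π)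
    (κ : Fin θ → ℕ) (hsum : ∑ i, κ i = n)
    (g : Fin n → Fin θ) (hg : fib n θ g = κ) :
    ∑ σ ∈ stab n g, f σ = ∑ σ ∈ youngFinset n θ (sortTuple θ κ), f σ := by
  classical
  set lam := sortTuple θ κ with hlam
  set e := Tuple.sort (fun i => OrderDual.toDual (κ i)) with he
  have hlam_sum : ∑ i, lam i = n := by
    rw [show (∑ i, lam i) = ∑ i, κ (e i) from rfl, Equiv.sum_comp e κ]
    exact hsum
  set gc := gcan n θ hθ lam hlam_sum with hgc
  set h := fun v => e (gc v) with hh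
  have hfib_h : fib n θ h = κ := by
    funext i
    unfold fib
    have hiff : ∀ v : Fin n, h v = i ↔ gc v = e.symm i := by
      intro v
      rw [hh]
      exact (Equiv.apply_eq_iff_eq_symm_apply e)
    rw [Finset.filter_congr (fun v _ => by rw [hiff v])]
    have : (Finset.univ.filter (fun v : Fin n => gc v = e.symm i)).card
        = fib n θ gc (e.symm i) := rfl
    rw [this, hgc, fib_gcan lam hθ hlam_sum]
    show lam (e.symm i) = κ i
    rw [hlam]
    show κ (e (e.symm i)) = κ i
    rw [Equiv.apply_symm_apply]
  have hstab_h : stab n h = stab n gc := by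
    ext σ
    simp only [stab, mem_filter, mem_univ, true_and]
    constructor
    · intro hs v
      exact e.injective (hs v)
    · intro hs v
      exact congrArg e (hs v)
  obtain ⟨τ, hτ⟩ := exists_perm_of_fib_eq h g (by rw [hfib_h, hg])
  rw [stab_sum_eq f hclass h g τ hτ, hstab_h, hgc, stab_gcan lam hθ hlam_sum]

/-! ### Fiber sizes land in compositions; weight formula -/

lemma fib_mem_comps (g : Fin n → Fin θ) : fib n θ g ∈ comps θ n := by
  simp only [comps, mem_filter, Fintype.mem_piFinset, Finset.mem_range]
  constructor
  · intro i
    have : fib n θ g i ≤ n := by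
      calc fib n θ g i ≤ (Finset.univ : Finset (Fin n)).card := Finset.card_filter_le _ _
      _ = n := by rw [Finset.card_univ, Fintype.card_fin]
    omega
  · have : (Finset.univ : Finset (Fin n)).card
        = ∑ b ∈ (Finset.univ : Finset (Fin θ)),
            ((Finset.univ : Finset (Fin n)).filter (fun v => g v = b)).card :=
      Finset.card_eq_sum_card_fiberwise (fun v _ => Finset.mem_univ (g v))
    rw [Finset.card_univ, Fintype.card_fin] at this
    exact this.symm

lemma weight_eq (p : Fin θ → ℝ) (g : Fin n → Fin θ) :
    ∏ v, p (g v) = ∏ i, p i ^ fib n θ g i := by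
  rw [← Finset.prod_fiberwise_of_maps_to (g := g) (t := Finset.univ)
    (fun v _ => Finset.mem_univ _) (fun v => p (g v))]
  apply Finset.prod_congr rfl
  intro i _
  have hcon : ∀ v ∈ Finset.univ.filter (fun v : Fin n => g v = i),
      p (g v) = p i := by
    intro v hv
    simp only [mem_filter, mem_univ, true_and] at hv
    rw [hv]
  rw [Finset.prod_congr rfl hcon, Finset.prod_const]
  rfl

end Stmt2Aux

/-- Colouring lemma. -/
theorem stmt2 (n θ : ℕ) (hn : 1 ≤ n) (hθ : 2 ≤ θ)
    (f : Equiv.Perm (Fin n) → ℝ) (hf0 : ∀ σ, 0 ≤ f σ)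
    (hf1 : ∑ σ : Equiv.Perm (Fin n), f σ = 1)
    (hclass : ∀ σ π : Equiv.Perm (Fin n), σ.cycleType = π.cycleType → f σ = f π)
    (p : Fin θ → ℝ) (hp : ∀ i, 0 ≤ p i) (hp1 : ∑ i, p i = 1) :
    ∑ σ : Equiv.Perm (Fin n),
        f σ * ((cycleMultiset n σ).map (fun l => ∑ i, p i ^ l)).prod
      = ∑ lam ∈ partitionsTh θ n,
          (Nat.multinomial Finset.univ lam : ℝ) *
            (∑ κ ∈ rearrangements θ n lam, ∏ i, p i ^ κ i) *
            ∑ σ ∈ youngFinset n θ lam, f σ := by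
  open Finset Equiv Stmt2Aux in
  classical
  have hθ1 : 1 ≤ θ := by omega
  -- LHS chain
  have lhs1 : ∑ σ : Equiv.Perm (Fin n),
      f σ * ((cycleMultiset n σ).map (fun l => ∑ i, p i ^ l)).prod
      = ∑ g : Fin n → Fin θ, (∑ σ ∈ stab n g, f σ) * ∏ v, p (g v) := by
    calc ∑ σ : Equiv.Perm (Fin n),
        f σ * ((cycleMultiset n σ).map (fun l => ∑ i, p i ^ l)).prod
        = ∑ σ : Equiv.Perm (Fin n), ∑ g ∈ Finset.univ.filter
            (fun g : Fin n → Fin θ => ∀ v, g (σ v) = g v), f σ * ∏ v, p (g v) := by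
          apply Finset.sum_congr rfl
          intro σ _
          rw [stepA p hp1 σ, Finset.mul_sum]
      _ = ∑ σ : Equiv.Perm (Fin n), ∑ g : Fin n → Fin θ,
            if (∀ v, g (σ v) = g v) then f σ * ∏ v, p (g v) else 0 := by
          apply Finset.sum_congr rfl
          intro σ _
          rw [Finset.sum_filter]
      _ = ∑ g : Fin n → Fin θ, ∑ σ : Equiv.Perm (Fin n),
            if (∀ v, g (σ v) = g v) then f σ * ∏ v, p (g v) else 0 := Finset.sum_comm
      _ = ∑ g : Fin n → Fin θ, ∑ σ ∈ stab n g, f σ * ∏ v, p (g v) := by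
          apply Finset.sum_congr rfl
          intro g _
          rw [stab, Finset.sum_filter]
      _ = ∑ g : Fin n → Fin θ, (∑ σ ∈ stab n g, f σ) * ∏ v, p (g v) := by
          apply Finset.sum_congr rfl
          intro g _
          rw [Finset.sum_mul]
  have lhs2 : ∑ g : Fin n → Fin θ, (∑ σ ∈ stab n g, f σ) * ∏ v, p (g v)
      = ∑ κ ∈ comps θ n, (Nat.multinomial Finset.univ κ : ℝ) *
          ((∏ i, p i ^ κ i) * ∑ σ ∈ youngFinset n θ (sortTuple θ κ), f σ) := by
    rw [← Finset.sum_fiberwise_of_maps_to (g := fib n θ) (t := comps θ n)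
      (fun g _ => fib_mem_comps g) (fun g => (∑ σ ∈ stab n g, f σ) * ∏ v, p (g v))]
    apply Finset.sum_congr rfl
    intro κ hκ
    have hκsum : ∑ i, κ i = n := by
      simp only [comps, mem_filter] at hκ
      exact hκ.2
    have hconst : ∀ g ∈ Finset.univ.filter (fun g : Fin n → Fin θ => fib n θ g = κ),
        (∑ σ ∈ stab n g, f σ) * ∏ v, p (g v)
          = (∏ i, p i ^ κ i) * ∑ σ ∈ youngFinset n θ (sortTuple θ κ), f σ := by
      intro g hg
      simp only [mem_filter, mem_univ, true_and] at hg
      rw [weight_eq p g, hg, stabsum_young hθ1 f hclass κ hκsum g hg]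
      ring
    rw [Finset.sum_congr rfl hconst, Finset.sum_const,
      card_fib_eq κ hκsum (gcan n θ hθ1 κ hκsum) (fib_gcan κ hθ1 hκsum), nsmul_eq_mul]
  -- RHS chain
  have rhs1 : ∑ lam ∈ partitionsTh θ n,
      (Nat.multinomial Finset.univ lam : ℝ) *
        (∑ κ ∈ rearrangements θ n lam, ∏ i, p i ^ κ i) *
        ∑ σ ∈ youngFinset n θ lam, f σ
      = ∑ x ∈ (partitionsTh θ n).sigma (fun lam => rearrangements θ n lam),
          (Nat.multinomial Finset.univ x.1 : ℝ) * ((∏ i, p i ^ x.2 i) *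
            ∑ σ ∈ youngFinset n θ x.1, f σ) := by
    rw [Finset.sum_sigma]
    have expand : ∀ (M Y : ℝ) (r : Finset (Fin θ → ℕ)) (W : (Fin θ → ℕ) → ℝ),
        M * (∑ κ ∈ r, W κ) * Y = ∑ κ ∈ r, M * (W κ * Y) := by
      intro M Y r W
      rw [Finset.mul_sum, Finset.sum_mul]
      exact Finset.sum_congr rfl (fun κ _ => by ring)
    apply Finset.sum_congr rfl
    intro lam _
    exact expand _ _ _ _
  have rhs2 : ∑ x ∈ (partitionsTh θ n).sigma (fun lam => rearrangements θ n lam),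
      (Nat.multinomial Finset.univ x.1 : ℝ) * ((∏ i, p i ^ x.2 i) *
        ∑ σ ∈ youngFinset n θ x.1, f σ)
      = ∑ κ ∈ comps θ n, (Nat.multinomial Finset.univ κ : ℝ) *
          ((∏ i, p i ^ κ i) * ∑ σ ∈ youngFinset n θ (sortTuple θ κ), f σ) := by
    apply Finset.sum_bij (i := fun x _ => x.2)
    · rintro ⟨lam, κ⟩ hx
      rw [Finset.mem_sigma] at hx
      obtain ⟨hlam, hκ⟩ := hx
      simp only [partitionsTh, mem_filter] at hlam
      simp only [rearrangements, mem_filter] at hκ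
      obtain ⟨hκ1, π, hκ2⟩ := hκ
      simp only [comps, mem_filter]
      refine ⟨hκ1, ?_⟩
      rw [hκ2]
      rw [show (∑ i, (lam ∘ ⇑π) i) = ∑ i, lam (π i) from rfl, Equiv.sum_comp π lam]
      exact hlam.2.2
    · rintro ⟨lam₁, κ₁⟩ hx ⟨lam₂, κ₂⟩ hy heq
      simp only at heq
      rw [Finset.mem_sigma] at hx hy
      obtain ⟨hlam₁, hκ₁⟩ := hx
      obtain ⟨hlam₂, hκ₂⟩ := hy
      simp only [partitionsTh, mem_filter] at hlam₁ hlam₂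
      simp only [rearrangements, mem_filter] at hκ₁ hκ₂
      obtain ⟨-, π₁, hπ₁⟩ := hκ₁
      obtain ⟨-, π₂, hπ₂⟩ := hκ₂
      have hl : lam₁ = lam₂ := by
        apply sorted_unique lam₁ lam₂ hlam₁.2.1 hlam₂.2.1 (π₁.symm.trans π₂)
        funext i
        show lam₁ i = lam₂ (π₂ (π₁.symm i))
        have e1 : κ₁ (π₁.symm i) = lam₁ (π₁ (π₁.symm i)) := congrFun hπ₁ (π₁.symm i)
        have e2 : κ₂ (π₁.symm i) = lam₂ (π₂ (π₁.symm i)) := congrFun hπ₂ (π₁.symm i)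
        rw [Equiv.apply_symm_apply] at e1
        rw [← e1, heq]
        exact e2
      subst hl
      subst heq
      rfl
    · intro κ hκ
      obtain ⟨hmem, hrearr⟩ := sortTuple_mem κ hκ
      exact ⟨⟨sortTuple θ κ, κ⟩, Finset.mem_sigma.mpr ⟨hmem, hrearr⟩, rfl⟩
    · rintro ⟨lam, κ⟩ hx
      rw [Finset.mem_sigma] at hx
      obtain ⟨hlam, hκ⟩ := hx
      have hκc : κ ∈ comps θ n := by
        simp only [partitionsTh, mem_filter] at hlam
        simp only [rearrangements, mem_filter] at hκ
        obtain ⟨hκ1, π, hκ2⟩ := hκ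
        simp only [comps, mem_filter]
        refine ⟨hκ1, ?_⟩
        rw [hκ2]
        rw [show (∑ i, (lam ∘ ⇑π) i) = ∑ i, lam (π i) from rfl, Equiv.sum_comp π lam]
        exact hlam.2.2
      obtain ⟨hmem', hrearr'⟩ := sortTuple_mem κ hκc
      simp only [rearrangements, mem_filter] at hκ hrearr'
      obtain ⟨-, π₁, hπ₁⟩ := hκ
      obtain ⟨-, π₂, hπ₂⟩ := hrearr'
      simp only [partitionsTh, mem_filter] at hlam hmem'
      have hl : lam = sortTuple θ κ := by
        apply sorted_unique lam (sortTuple θ κ) hlam.2.1 hmem'.2.1 (π₁.symm.trans π₂)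
        funext i
        show lam i = sortTuple θ κ (π₂ (π₁.symm i))
        have e1 : κ (π₁.symm i) = lam (π₁ (π₁.symm i)) := congrFun hπ₁ (π₁.symm i)
        have e2 : κ (π₁.symm i) = sortTuple θ κ (π₂ (π₁.symm i)) := congrFun hπ₂ (π₁.symm i)
        rw [Equiv.apply_symm_apply] at e1
        rw [← e1]
        exact e2
      have hM : Nat.multinomial Finset.univ κ = Nat.multinomial Finset.univ lam := by
        rw [hπ₁]
        exact multinomial_comp lam π₁
      rw [hM, ← hl]
  rw [lhs1, lhs2, rhs1, rhs2]
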